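/- For each n ∈ ℕ with n ≥ 2, there exists a finite non-commutative Clifford semigroup S such that the clique number of the commuting graph of S equals n. -/

import Mathlib

/-- The commuting graph of a (non-commutative) semigroup: vertices are the
non-central elements, two distinct vertices are adjacent iff they commute. -/
def commGraph (S : Type*) [Mul S] : SimpleGraph {x : S // x ∉ Set.center S} where
  Adj a b := a ≠ b ∧ (a : S) * b = (b : S) * a
  symm := ⟨fun a b h => ⟨h.1.symm, h.2.symm⟩⟩
  loopless := ⟨fun a h => h.1 rfl⟩

namespace CliffordAux

abbrev P3 := Equiv.Perm (Fin 3)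

set_option synthInstance.maxSize 400 in
lemma factB : ∀ a b c : P3, a ≠ 1 → b ≠ 1 → c ≠ 1 → a ≠ b → a ≠ c → b ≠ c →
    a*b=b*a → a*c=c*a → b*c=c*b → False := by decide

lemma factA : ∀ y : P3, y ≠ 1 → (Equiv.swap 0 1) * y = y * Equiv.swap 0 1 →
    y = Equiv.swap 0 1 := by decide

lemma factC : (Equiv.swap 0 2 : P3) * (Equiv.swap 0 1) ≠ (Equiv.swap 0 1) * (Equiv.swap 0 2) := by
  decide

lemma zmod2_cases : ∀ ε : ZMod 2, ε ≠ 0 → ε = 1 := by decide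
lemma zmod2_three : ∀ ε : ZMod 2, ε + ε + ε = ε := by decide
lemma zmod2_idem : ∀ ε : ZMod 2, ε + ε = ε → ε = 0 := by decide

def τ (ε : ZMod 2) : P3 := if ε = 0 then 1 else Equiv.swap 0 1

lemma τ_add : ∀ a b : ZMod 2, τ (a + b) = τ a * τ b := by decide

lemma τ_one : τ 1 = Equiv.swap 0 1 := by decide

abbrev SS (m : ℕ) := (ZMod m × ZMod 2) ⊕ P3

variable {m : ℕ}

instance : Mul (SS m) where
  mul x y := match x, y with
    | .inl a, .inl b => .inl (a + b)
    | .inl a, .inr y => .inr (τ a.2 * y)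
    | .inr y, .inl a => .inr (y * τ a.2)
    | .inr y, .inr z => .inr (y * z)

@[simp] lemma mul_ll (a b : ZMod m × ZMod 2) :
    (Sum.inl a : SS m) * Sum.inl b = Sum.inl (a + b) := rfl
@[simp] lemma mul_lr (a : ZMod m × ZMod 2) (y : P3) :
    (Sum.inl a : SS m) * Sum.inr y = Sum.inr (τ a.2 * y) := rfl
@[simp] lemma mul_rl (a : ZMod m × ZMod 2) (y : P3) :
    (Sum.inr y : SS m) * Sum.inl a = Sum.inr (y * τ a.2) := rfl
@[simp] lemma mul_rr (y z : P3) :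
    (Sum.inr y : SS m) * Sum.inr z = Sum.inr (y * z) := rfl

instance : Semigroup (SS m) where
  mul_assoc x y z := by
    rcases x with a | p <;> rcases y with b | q <;> rcases z with c | r <;>
      simp [τ_add, mul_assoc, add_assoc]

instance : Inv (SS m) where
  inv x := match x with
    | .inl (c, ε) => .inl (-c, ε)
    | .inr y => .inr y⁻¹

@[simp] lemma inv_l (c : ZMod m) (ε : ZMod 2) :
    (Sum.inl (c, ε) : SS m)⁻¹ = Sum.inl (-c, ε) := rfl
@[simp] lemma inv_r (y : P3) : (Sum.inr y : SS m)⁻¹ = Sum.inr y⁻¹ := rfl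

lemma central_l0 (c : ZMod m) : (Sum.inl (c, 0) : SS m) ∈ Set.center (SS m) := by
  rw [Semigroup.mem_center_iff]
  rintro (b | y) <;> simp [τ, add_comm]

lemma central_r1 : (Sum.inr 1 : SS m) ∈ Set.center (SS m) := by
  rw [Semigroup.mem_center_iff]
  rintro (b | y) <;> simp

lemma notCentral_l1 (c : ZMod m) : (Sum.inl (c, 1) : SS m) ∉ Set.center (SS m) := by
  rw [Semigroup.mem_center_iff]
  intro h
  have := h (Sum.inr (Equiv.swap 0 2))
  simp only [mul_rl, mul_lr, Sum.inr.injEq, τ_one] at this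
  exact factC this

lemma notCentral_swap : (Sum.inr (Equiv.swap 0 1) : SS m) ∉ Set.center (SS m) := by
  rw [Semigroup.mem_center_iff]
  intro h
  have := h (Sum.inr (Equiv.swap 0 2))
  simp only [mul_rr, Sum.inr.injEq] at this
  exact factC this

abbrev V (m : ℕ) := {x : SS m // x ∉ Set.center (SS m)}

lemma vertex_cases (v : V m) :
    (∃ c : ZMod m, v.1 = Sum.inl (c, 1)) ∨ (∃ y : P3, y ≠ 1 ∧ v.1 = Sum.inr y) := by
  obtain ⟨x, hx⟩ := v
  rcases x with ⟨c, ε⟩ | y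
  · left
    have hε : ε = 1 := by
      rcases eq_or_ne ε 0 with h0 | h1
      · subst h0; exact absurd (central_l0 c) hx
      · exact zmod2_cases ε h1
    exact ⟨c, by subst hε; rfl⟩
  · right
    refine ⟨y, ?_, rfl⟩
    rintro rfl
    exact hx central_r1

variable [NeZero m]

def vL (c : ZMod m) : V m := ⟨Sum.inl (c, 1), notCentral_l1 c⟩
def vT : V m := ⟨Sum.inr (Equiv.swap 0 1), notCentral_swap⟩

omit [NeZero m] in
lemma vL_injective : Function.Injective (vL (m := m)) := by
  intro a b h
  simpa [vL, Prod.ext_iff] using h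

def bigClique : Finset (V m) := insert vT (Finset.univ.image vL)

lemma bigClique_card : (bigClique (m := m)).card = m + 1 := by
  rw [bigClique, Finset.card_insert_of_notMem, Finset.card_image_of_injective _ vL_injective,
    Finset.card_univ, ZMod.card]
  simp only [Finset.mem_image]
  rintro ⟨c, -, h⟩
  exact Sum.inl_ne_inr (congrArg Subtype.val h)

lemma bigClique_isClique : (commGraph (SS m)).IsClique (bigClique (m := m)) := by
  intro a ha b hb hab
  refine ⟨hab, ?_⟩
  simp only [bigClique, Finset.coe_insert, Set.mem_insert_iff, Finset.coe_image,
    Set.mem_image, Finset.mem_coe] at ha hb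
  rcases ha with rfl | ⟨c, -, rfl⟩ <;> rcases hb with rfl | ⟨d, -, rfl⟩
  · exact absurd rfl hab
  · show (Sum.inr (Equiv.swap 0 1) : SS m) * (Sum.inl (d, 1)) =
      (Sum.inl (d, 1) : SS m) * (Sum.inr (Equiv.swap 0 1))
    simp [τ_one]
  · show (Sum.inl (c, 1) : SS m) * (Sum.inr (Equiv.swap 0 1)) =
      (Sum.inr (Equiv.swap 0 1) : SS m) * (Sum.inl (c, 1))
    simp [τ_one]
  · show (Sum.inl (c, 1) : SS m) * (Sum.inl (d, 1)) =
      (Sum.inl (d, 1) : SS m) * (Sum.inl (c, 1))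
    simp [add_comm]

lemma clique_bound (hm : 1 ≤ m) (s : Finset (V m))
    (hs : (commGraph (SS m)).IsClique s) : s.card ≤ m + 1 := by
  classical
  set s₁ := s.filter (fun v => (v.1).isLeft) with hs₁
  set s₂ := s.filter (fun v => ¬ (v.1).isLeft) with hs₂
  have hsplit : s₁.card + s₂.card = s.card :=
    Finset.card_filter_add_card_filter_not _
  have hmem₂ : ∀ v ∈ s₂, ∃ y : P3, y ≠ 1 ∧ v.1 = Sum.inr y := by
    intro v hv
    rcases vertex_cases v with ⟨c, hc⟩ | h
    · exfalso
      rw [hs₂, Finset.mem_filter] at hv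
      exact hv.2 (by rw [hc]; rfl)
    · exact h
  have h₁ : s₁.card ≤ m := by
    have hle : s₁.card ≤ (Finset.univ : Finset (ZMod m)).card := by
      apply Finset.card_le_card_of_injOn
        (fun v => Sum.elim Prod.fst (fun _ => 0) v.1)
        (fun _ _ => Finset.mem_univ _)
      intro v hv w hw hvw
      rw [Finset.mem_coe, hs₁, Finset.mem_filter] at hv hw
      rcases vertex_cases v with ⟨c, hc⟩ | ⟨y, -, hy⟩
      · rcases vertex_cases w with ⟨d, hd⟩ | ⟨z, -, hz⟩
        · apply Subtype.ext
          rw [hc, hd]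
          simp only [hc, hd, Sum.elim_inl] at hvw
          rw [hvw]
        · exact absurd (by rw [hz]; rfl : (w.1).isLeft = false) (by simp [hw.2])
      · exact absurd (by rw [hy]; rfl : (v.1).isLeft = false) (by simp [hv.2])
    simpa [ZMod.card] using hle
  rcases Finset.eq_empty_or_nonempty s₁ with h1e | ⟨v₀, hv₀⟩
  · have h10 : s₁.card = 0 := by rw [h1e]; rfl
    have h2 : s₂.card ≤ 2 := by
      by_contra hc
      obtain ⟨a, ha, b, hb, c, hcm, hab, hac, hbc⟩ :=
        Finset.two_lt_card.mp (lt_of_not_ge hc)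
      obtain ⟨ya, hya, hea⟩ := hmem₂ a ha
      obtain ⟨yb, hyb, heb⟩ := hmem₂ b hb
      obtain ⟨yc, hyc, hec⟩ := hmem₂ c hcm
      have has : a ∈ s := (Finset.mem_filter.mp ha).1
      have hbs : b ∈ s := (Finset.mem_filter.mp hb).1
      have hcs : c ∈ s := (Finset.mem_filter.mp hcm).1
      have cab := (hs has hbs hab).2
      have cac := (hs has hcs hac).2
      have cbc := (hs hbs hcs hbc).2
      rw [hea, heb] at cab
      rw [hea, hec] at cac
      rw [heb, hec] at cbc
      simp only [mul_rr, Sum.inr.injEq] at cab cac cbc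
      have nab : ya ≠ yb := fun h => hab (Subtype.ext (by rw [hea, heb, h]))
      have nac : ya ≠ yc := fun h => hac (Subtype.ext (by rw [hea, hec, h]))
      have nbc : yb ≠ yc := fun h => hbc (Subtype.ext (by rw [heb, hec, h]))
      exact factB ya yb yc hya hyb hyc nab nac nbc cab cac cbc
    omega
  · obtain ⟨c₀, hc₀⟩ : ∃ c : ZMod m, v₀.1 = Sum.inl (c, 1) := by
      rcases vertex_cases v₀ with h | ⟨y, -, hy⟩
      · exact h
      · rw [hs₁, Finset.mem_filter] at hv₀
        exact absurd (by rw [hy]; rfl : (v₀.1).isLeft = false) (by simp [hv₀.2])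
    have hv₀s : v₀ ∈ s := (Finset.mem_filter.mp hv₀).1
    have key : ∀ w ∈ s₂, w.1 = Sum.inr (Equiv.swap 0 1) := by
      intro w hw
      obtain ⟨y, hy, hey⟩ := hmem₂ w hw
      have hws : w ∈ s := (Finset.mem_filter.mp hw).1
      have hne : v₀ ≠ w := by
        intro h
        rw [h, hey] at hc₀
        exact Sum.inr_ne_inl hc₀
      have hcom := (hs hv₀s hws hne).2
      rw [hc₀, hey] at hcom
      simp only [mul_lr, mul_rl, Sum.inr.injEq, τ_one] at hcom
      rw [hey, factA y hy hcom]
    have h2 : s₂.card ≤ 1 := Finset.card_le_one.mpr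
      (fun a ha b hb => Subtype.ext (by rw [key a ha, key b hb]))
    omega

lemma cliqueNum_eq : (commGraph (SS m)).cliqueNum = m + 1 := by
  have hm : 1 ≤ m := Nat.one_le_iff_ne_zero.mpr (NeZero.ne m)
  have hub : (m + 1) ∈ upperBounds {k | ∃ s, (commGraph (SS m)).IsNClique k s} := by
    rintro k ⟨s, hks⟩
    rw [← hks.2]
    exact clique_bound hm s hks.1
  have hmem : (m + 1) ∈ {k | ∃ s, (commGraph (SS m)).IsNClique k s} :=
    ⟨bigClique, bigClique_isClique, bigClique_card⟩
  exact le_antisymm (csSup_le ⟨m + 1, hmem⟩ hub) (le_csSup ⟨m + 1, hub⟩ hmem)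

end CliffordAux

open CliffordAux in
theorem exists_clifford_semigroup_cliqueNum_eq (n : ℕ) (hn : 2 ≤ n) :
    ∃ (S : Type) (_ : Semigroup S) (_ : Fintype S) (_ : Inv S),
      --  is a Clifford semigroup
      (∀ x : S, x⁻¹⁻¹ = x) ∧
      (∀ x : S, x * x⁻¹ * x = x) ∧
      (∀ x : S, x⁻¹ * x = x * x⁻¹) ∧
      (∀ e : S, e * e = e → ∀ y : S, e * y = y * e) ∧
      --  is non-commutative
      (∃ a b : S, a * b ≠ b * a) ∧
      -- and the clique number of its commuting graph is 
      (commGraph S).cliqueNum = n := by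
  haveI : NeZero (n - 1) := ⟨by omega⟩
  refine ⟨SS (n - 1), inferInstance, inferInstance, inferInstance, ?_, ?_, ?_, ?_, ?_, ?_⟩
  · rintro (⟨c, ε⟩ | y) <;> simp
  · rintro (⟨c, ε⟩ | y)
    · simp only [inv_l, mul_ll, Sum.inl.injEq, Prod.mk.injEq, Prod.mk_add_mk]
      exact ⟨by ring, zmod2_three ε⟩
    · simp
  · rintro (⟨c, ε⟩ | y) <;> simp [add_comm]
  · rintro (⟨c, ε⟩ | y) he
    · simp only [mul_ll, Sum.inl.injEq, Prod.mk_add_mk, Prod.mk.injEq] at he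
      have hc0 : c = 0 := by linear_combination he.1
      have he0 : ε = 0 := zmod2_idem ε he.2
      subst hc0; subst he0
      exact fun y => (Semigroup.mem_center_iff.mp (central_l0 0) y).symm
    · simp only [mul_rr, Sum.inr.injEq] at he
      have : y = 1 := by
        have := mul_eq_right.mp he
        exact this
      subst this
      exact fun z => (Semigroup.mem_center_iff.mp central_r1 z).symm
  · exact ⟨Sum.inr (Equiv.swap 0 2), Sum.inr (Equiv.swap 0 1), by
      simp only [mul_rr, ne_eq, Sum.inr.injEq]
      exact factC⟩
  · rw [cliqueNum_eq]; omega
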